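/- Consider an EF-like sub-B family: there is an extended-real-valued convex function B, finite, strictly convex and differentiable on Λ := (∇B)^{−1}(M), such that ψ_μ(λ) = B(λ + θ_μ) − B(θ_μ) with θ_μ := (∇B)^{−1}(μ) for each μ ∈ M. Suppose ∇B is convex (equivalently, ∇B* is concave). Fix n, a sample mean x̄, and d > 0; for μ0 ∈ M with μ0 ≤ x̄, let μ1 = μ1(μ0) > μ0 be defined by D_{B*}(μ1, μ0) = d, where D_{B*}(z1, z0) := B*(z1) − B*(z0) − (B*)'(z0)(z1 − z0). Then the map μ0 ↦ L_n(μ1(μ0), μ0) = exp{ n·( d + [(B*)'(μ1) − (B*)'(μ0)]·(x̄ − μ1) ) } is nonincreasing on (−∞, x̄] ∩ M; equivalently, the derivative in μ0 of f(μ0) := d + [(B*)'(μ1(μ0)) − (B*)'(μ0)]·(x̄ − μ1(μ0)) is nonpositive for all μ0 ≤ x̄ in M. -/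

import Mathlib

open Real Set

noncomputable section

set_option maxHeartbeats 1000000

/-- **Proposition 1 (EF-like sub-B families with convex `∇B` have monotone LR-like statistics
in the null parameter).** Here `Bs = B*` is the convex conjugate of `B` and `Bs'` its
derivative on the open convex mean space `M`; convexity of `∇B` is equivalent to concavity
of `∇B* = Bs'`. For `μ0 ∈ M` with `μ0 ≤ x̄`, `μ1 μ0 > μ0` is defined by
`D_{B*}(μ1(μ0), μ0) = d`, and the map `μ0 ↦ L_n(μ1(μ0), μ0)` is nonincreasing on
`(-∞, x̄] ∩ M`. -/
theorem ef_like_lr_antitone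
    (M : Set ℝ) (hM : IsOpen M) (hMc : Convex ℝ M)
    (Bs Bs' : ℝ → ℝ)
    (hBs_conv : StrictConvexOn ℝ M Bs)
    (hBs_deriv : ∀ x ∈ M, HasDerivAt Bs (Bs' x) x)
    (hBs'_concave : ConcaveOn ℝ M Bs')
    (n : ℕ) (hn : 1 ≤ n) (xbar d : ℝ) (hd : 0 < d)
    (μ1 : ℝ → ℝ)
    (hμ1 : ∀ μ0 ∈ M ∩ Set.Iic xbar, μ1 μ0 ∈ M ∧ μ0 < μ1 μ0 ∧
      Bs (μ1 μ0) - Bs μ0 - Bs' μ0 * (μ1 μ0 - μ0) = d) :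
    AntitoneOn
      (fun μ0 => Real.exp (n * (d + (Bs' (μ1 μ0) - Bs' μ0) * (xbar - μ1 μ0))))
      (M ∩ Set.Iic xbar) := by
  -- basic set facts
  have hOC : M.OrdConnected := hMc.ordConnected
  have hIcc : ∀ {x y : ℝ}, x ∈ M → y ∈ M → Set.Icc x y ⊆ M := fun hx hy => hOC.out hx hy
  have huIcc : ∀ {x y : ℝ}, x ∈ M → y ∈ M → Set.uIcc x y ⊆ M :=
    fun hx hy => hOC.uIcc_subset hx hy
  -- strict slope inequalities
  have hslope1 : ∀ {x y : ℝ}, x ∈ M → y ∈ M → x < y → Bs' x * (y - x) < Bs y - Bs x := by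
    intro x y hx hy hxy
    have h := hBs_conv.lt_slope_of_hasDerivAt hx hy hxy (hBs_deriv x hx)
    rw [slope_def_field] at h
    have h2 := (lt_div_iff₀ (by linarith : (0:ℝ) < y - x)).1 h
    linarith
  have hslope2 : ∀ {x y : ℝ}, x ∈ M → y ∈ M → x < y → Bs y - Bs x < Bs' y * (y - x) := by
    intro x y hx hy hxy
    have h := hBs_conv.slope_lt_of_hasDerivAt hx hy hxy (hBs_deriv y hy)
    rw [slope_def_field] at h
    have h2 := (div_lt_iff₀ (by linarith : (0:ℝ) < y - x)).1 h
    linarith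
  -- monotonicity of the derivative
  have hg_mono : ∀ {x y : ℝ}, x ∈ M → y ∈ M → x ≤ y → Bs' x ≤ Bs' y := by
    intro x y hx hy hxy
    rcases eq_or_lt_of_le hxy with rfl | h
    · exact le_refl _
    · have h1 := hslope1 hx hy h
      have h2 := hslope2 hx hy h
      nlinarith
  -- gradient inequality (any order)
  have hgrad : ∀ {x z : ℝ}, x ∈ M → z ∈ M → Bs' x * (z - x) ≤ Bs z - Bs x := by
    intro x z hx hz
    rcases lt_trichotomy x z with h | rfl | h
    · exact (hslope1 hx hz h).le
    · simp
    · have := hslope2 hz hx h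
      nlinarith
  -- concavity three-point inequality
  have hconc : ∀ {p q r : ℝ}, p ∈ M → r ∈ M → p ≤ q → q ≤ r →
      Bs' p * (r - q) + Bs' r * (q - p) ≤ Bs' q * (r - p) := by
    intro p q r hp hr hpq hqr
    rcases eq_or_lt_of_le (hpq.trans hqr) with heq | hpr
    · have hqp : q = p := le_antisymm (heq ▸ hqr) hpq
      subst hqp
      have : r = q := heq.symm
      subst this
      ring_nf
      exact le_refl _
    · have hrp : (0:ℝ) < r - p := by linarith
      have h := hBs'_concave.2 hp hr
        (div_nonneg (by linarith : (0:ℝ) ≤ r - q) hrp.le)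
        (div_nonneg (by linarith : (0:ℝ) ≤ q - p) hrp.le)
        (by field_simp; ring)
      simp only [smul_eq_mul] at h
      have harg : (r - q) / (r - p) * p + (q - p) / (r - p) * r = q := by
        field_simp; ring
      rw [harg] at h
      have hmul := mul_le_mul_of_nonneg_right h hrp.le
      have e1 : ((r - q) / (r - p) * Bs' p + (q - p) / (r - p) * Bs' r) * (r - p)
          = Bs' p * (r - q) + Bs' r * (q - p) := by field_simp
      rw [e1] at hmul
      linarith [hmul]
  -- interval integrability of Bs'
  have hint : ∀ (x y : ℝ), x ∈ M → y ∈ M →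
      IntervalIntegrable Bs' MeasureTheory.volume x y := by
    intro x y hx hy
    apply MonotoneOn.intervalIntegrable
    intro s hs t ht hst
    exact hg_mono (huIcc hx hy hs) (huIcc hx hy ht) hst
  -- FTC
  have hftc : ∀ (x y : ℝ), x ∈ M → y ∈ M → (∫ s in x..y, Bs' s) = Bs y - Bs x := by
    intro x y hx hy
    exact intervalIntegral.integral_eq_sub_of_hasDerivAt
      (fun s hs => hBs_deriv s (huIcc hx hy hs)) (hint x y hx hy)
  -- integral of a linear function
  have hlin : ∀ (A B x y : ℝ), (∫ s in x..y, (A + B * s))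
      = A * (y - x) + B * (y ^ 2 - x ^ 2) / 2 := by
    intro A B x y
    have hder : ∀ s : ℝ, HasDerivAt (fun t => A * t + B * t ^ 2 / 2) (A + B * s) s := by
      intro s
      have h1 := (hasDerivAt_id s).const_mul A
      have h2 := ((hasDerivAt_pow 2 s).const_mul B).div_const 2
      convert h1.add h2 using 1
      · rfl
      · rfl
      · rfl
      · ring
    rw [intervalIntegral.integral_eq_sub_of_hasDerivAt (fun s _ => hder s)
      ((continuous_const.add (continuous_const.mul continuous_id)).intervalIntegrable x y)]
    ring
  -- lower integral comparison
  have hlow : ∀ (x y A B : ℝ), x ∈ M → y ∈ M → x ≤ y →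
      (∀ s ∈ Set.Icc x y, A + B * s ≤ Bs' s) →
      A * (y - x) + B * (y ^ 2 - x ^ 2) / 2 ≤ Bs y - Bs x := by
    intro x y A B hx hy hxy hpt
    rw [← hftc x y hx hy, ← hlin A B x y]
    exact intervalIntegral.integral_mono_on hxy
      ((continuous_const.add (continuous_const.mul continuous_id)).intervalIntegrable x y)
      (hint x y hx hy) hpt
  -- upper integral comparison
  have hupp : ∀ (x y A B : ℝ), x ∈ M → y ∈ M → x ≤ y →
      (∀ s ∈ Set.Icc x y, Bs' s ≤ A + B * s) →
      Bs y - Bs x ≤ A * (y - x) + B * (y ^ 2 - x ^ 2) / 2 := by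
    intro x y A B hx hy hxy hpt
    rw [← hftc x y hx hy, ← hlin A B x y]
    exact intervalIntegral.integral_mono_on hxy (hint x y hx hy)
      ((continuous_const.add (continuous_const.mul continuous_id)).intervalIntegrable x y) hpt
  -- trapezoid lower bound (chord below graph of concave Bs')
  have htrap : ∀ {x y : ℝ}, x ∈ M → y ∈ M → x < y →
      (Bs' x + Bs' y) * (y - x) / 2 ≤ Bs y - Bs x := by
    intro x y hx hy hxy
    have hy0 : (0:ℝ) < y - x := by linarith
    have h := hlow x y ((Bs' x * y - Bs' y * x) / (y - x)) ((Bs' y - Bs' x) / (y - x)) hx hy hxy.le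
      (by
        intro s hs
        have hc := hconc hx hy hs.1 hs.2
        have e : (Bs' x * y - Bs' y * x) / (y - x) + (Bs' y - Bs' x) / (y - x) * s
            = (Bs' x * (y - s) + Bs' y * (s - x)) / (y - x) := by field_simp; ring
        rw [e, div_le_iff₀ hy0]
        linarith)
    calc (Bs' x + Bs' y) * (y - x) / 2
        = (Bs' x * y - Bs' y * x) / (y - x) * (y - x)
          + (Bs' y - Bs' x) / (y - x) * (y ^ 2 - x ^ 2) / 2 := by field_simp; ring
      _ ≤ Bs y - Bs x := h
  -- secant upper bound: for x ≤ y < z in M, Bs y - Bs x ≤ line through (y,g y),(z,g z)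
  -- stated in multiplied form to avoid divisions
  have hsec : ∀ {x y z : ℝ}, x ∈ M → y ∈ M → z ∈ M → x ≤ y → y < z →
      (z - y) * (Bs y - Bs x) ≤
        (z - y) * (Bs' y * (y - x)) - (Bs' z - Bs' y) * (y - x) ^ 2 / 2 := by
    intro x y z hx hy hz hxy hyz
    have hzy : (0:ℝ) < z - y := by linarith
    have h := hupp x y ((Bs' y * z - Bs' z * y) / (z - y)) ((Bs' z - Bs' y) / (z - y)) hx hy hxy
      (by
        intro s hs
        have hc := hconc (hIcc hx hy hs) hz hs.2 hyz.le
        have e : (Bs' y * z - Bs' z * y) / (z - y) + (Bs' z - Bs' y) / (z - y) * s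
            = (Bs' y * (z - s) - Bs' z * (y - s)) / (z - y) := by field_simp; ring
        rw [e, le_div_iff₀ hzy]
        nlinarith [hc])
    have h2 := mul_le_mul_of_nonneg_left h hzy.le
    calc (z - y) * (Bs y - Bs x) ≤ (z - y) *
          ((Bs' y * z - Bs' z * y) / (z - y) * (y - x)
            + (Bs' z - Bs' y) / (z - y) * (y ^ 2 - x ^ 2) / 2) := h2
      _ = (z - y) * (Bs' y * (y - x)) - (Bs' z - Bs' y) * (y - x) ^ 2 / 2 := by
          field_simp; ring
  -- now the main argument
  intro a haa b hbb hab
  obtain ⟨haM, hax⟩ := haa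
  obtain ⟨hbM, hbx⟩ := hbb
  obtain ⟨hαM, haα, hda⟩ := hμ1 a ⟨haM, hax⟩
  obtain ⟨hβM, hbβ, hdb⟩ := hμ1 b ⟨hbM, hbx⟩
  set α := μ1 a with hα_def
  set β := μ1 b with hβ_def
  simp only
  rcases eq_or_lt_of_le hab with rfl | hlt
  · exact le_refl _
  -- key goal on the linear statistic
  have key : (Bs' β - Bs' b) * (xbar - β) ≤ (Bs' α - Bs' a) * (xbar - α) := by
    -- Step 1 : α ≤ β
    have hαβ : α ≤ β := by
      by_contra hcon
      push_neg at hcon  -- β < α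
      have hbα : b < α := lt_trans hbβ hcon
      have h1 : Bs' β * (α - β) ≤ Bs α - Bs β := hgrad hβM hαM
      have h2 : (Bs' β - Bs' b) * (α - β) ≥ 0 :=
        mul_nonneg (by linarith [hg_mono hbM hβM hbβ.le]) (by linarith)
      have h3 : Bs' a * (b - a) < Bs b - Bs a := hslope1 haM hbM hlt
      have h4 : (Bs' b - Bs' a) * (α - b) ≥ 0 :=
        mul_nonneg (by linarith [hg_mono haM hbM hlt.le]) (by linarith)
      linarith only [h1, h2, h3, h4, hda, hdb]
    have hgαβ : Bs' α ≤ Bs' β := hg_mono hαM hβM hαβ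
    have hgab : Bs' a ≤ Bs' b := hg_mono haM hbM hlt.le
    have hgaα : Bs' a ≤ Bs' α := hg_mono haM hαM haα.le
    have hgbβ : Bs' b ≤ Bs' β := hg_mono hbM hβM hbβ.le
    have ht1 : (0:ℝ) < α - a := by linarith
    have ht2 : (0:ℝ) < β - b := by linarith
    -- Main Lemma : Bs' β - Bs' b ≤ Bs' α - Bs' a
    have hPQ : Bs' β - Bs' b ≤ Bs' α - Bs' a := by
      by_contra hcon
      push_neg at hcon  -- P < Q
      have hQpos : (0:ℝ) < Bs' β - Bs' b := by linarith
      rcases le_or_gt α b with hcase | hcase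
      · -- case α ≤ b : disjoint intervals
        have hX : α < β := lt_of_le_of_lt hcase hbβ
        have hX0 : (0:ℝ) < β - α := by linarith
        have h1 : (Bs' b + Bs' β) * (β - b) / 2 ≤ Bs β - Bs b := htrap hbM hβM hbβ
        have h2 := hsec haM hαM hβM haα.le hX
        have h3 : (Bs' β - Bs' b) * (β - α) ≤ (Bs' β - Bs' α) * (β - b) := by
          have hc := hconc hαM hβM hcase hbβ.le
          nlinarith [hc]
        have eβb : Bs β - Bs b = d + Bs' b * (β - b) := by linarith
        have eαa : Bs α - Bs a = d + Bs' a * (α - a) := by linarith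
        rw [eβb] at h1
        rw [eαa] at h2
        -- s1 : Q*t2 ≤ 2*d
        have s1 : (Bs' β - Bs' b) * (β - b) ≤ 2 * d := by linarith only [h1]
        -- s2 : (β-α)*d ≤ (β-α)*(P*t1) - (Bs'β-Bs'α)*t1^2/2
        have s2 : (β - α) * d ≤ (β - α) * ((Bs' α - Bs' a) * (α - a))
            - (Bs' β - Bs' α) * (α - a) ^ 2 / 2 := by linarith only [h2]
        -- multiply s2 by t2, bound (Bs'β-Bs'α)*t1^2*t2 from below via h3*t1^2
        have s3 : (Bs' β - Bs' b) * (β - α) * (α - a) ^ 2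
            ≤ (Bs' β - Bs' α) * (β - b) * (α - a) ^ 2 :=
          mul_le_mul_of_nonneg_right h3 (sq_nonneg _)
        have s4 := mul_le_mul_of_nonneg_right s2 (by linarith : (0:ℝ) ≤ 2 * (β - b))
        have s5 := mul_le_mul_of_nonneg_right s1
          (by positivity : (0:ℝ) ≤ (β - α) * (β - b))
        -- combine: (β-α)*(Q*t2^2 + Q*t1^2 - 2*P*t1*t2) ≤ 0
        have hE' : (β - α) * ((Bs' β - Bs' b) * (β - b) ^ 2 + (Bs' β - Bs' b) * (α - a) ^ 2
            - 2 * ((Bs' α - Bs' a) * (α - a) * (β - b))) ≤ 0 := by linarith only [s3, s4, s5]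
        have hE : (Bs' β - Bs' b) * (β - b) ^ 2 + (Bs' β - Bs' b) * (α - a) ^ 2
            - 2 * ((Bs' α - Bs' a) * (α - a) * (β - b)) ≤ 0 := by
          by_contra hEc
          push_neg at hEc
          exact absurd hE' (mul_pos hX0 hEc).not_ge
        have c1 : (0:ℝ) ≤ (Bs' β - Bs' b) * ((α - a) - (β - b)) ^ 2 :=
          mul_nonneg hQpos.le (sq_nonneg _)
        have c2 : (0:ℝ) < ((Bs' β - Bs' b) - (Bs' α - Bs' a)) * ((α - a) * (β - b)) :=
          mul_pos (by linarith) (mul_pos ht1 ht2)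
        linarith only [hE, c1, c2]
      · -- case b < α
        have hw : (0:ℝ) < α - b := by linarith
        have hG1 : (0:ℝ) ≤ Bs' α - Bs' b := by linarith [hg_mono hbM hαM hcase.le]
        have hc0 : (0:ℝ) ≤ Bs' b - Bs' a := by linarith
        have hR : Bs' b - Bs' a < Bs' β - Bs' α := by linarith
        have hRpos : (0:ℝ) < Bs' β - Bs' α := lt_of_le_of_lt hc0 hR
        have hX0 : α < β := by
          rcases eq_or_lt_of_le hαβ with h | h
          · exfalso; rw [h] at hRpos; linarith
          · exact h
        -- S1
        have hS1 : (Bs' β - Bs' α) * (α - b) ≤ (Bs' α - Bs' b) * (β - α) := by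
          have hc := hconc hbM hβM hcase.le hαβ
          linarith [hc]
        have hG1pos : (0:ℝ) < Bs' α - Bs' b := by
          rcases eq_or_lt_of_le hG1 with h | h
          · exfalso
            have hz : (Bs' α - Bs' b) * (β - α) = 0 := by rw [← h]; ring
            linarith [hS1, mul_pos hRpos hw, hz]
          · exact h
        -- trapezoid on [α,β]
        have h1 : (Bs' α + Bs' β) * (β - α) / 2 ≤ Bs β - Bs α := htrap hαM hβM hX0
        -- secant upper bound on [a,b] w.r.t. chord of (b,α)
        have h2 := hsec haM hbM hαM hlt.le hcase
        -- E0 : Bs β - Bs α = (Bs b - Bs a) + Bs' b*(β-b) - Bs' a*(α-a)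
        have hE0 : Bs β - Bs α = (Bs b - Bs a) + Bs' b * (β - b) - Bs' a * (α - a) := by
          linarith [hda, hdb]
        -- (A'') : w*(G1*X + R*X/2) ≤ w*(c*u + c*w) - G1*u^2/2
        rw [hE0] at h1
        have m0 := mul_le_mul_of_nonneg_left h1 hw.le
        have hA : (α - b) * ((Bs' α - Bs' b) * (β - α) + (Bs' β - Bs' α) * (β - α) / 2)
            ≤ (α - b) * ((Bs' b - Bs' a) * (b - a) + (Bs' b - Bs' a) * (α - b))
              - (Bs' α - Bs' b) * (b - a) ^ 2 / 2 := by linarith only [m0, h2]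
        -- multiply by 2*G1 and apply hS1 twice
        have m1 := mul_le_mul_of_nonneg_left hA (by linarith : (0:ℝ) ≤ 2 * (Bs' α - Bs' b))
        have m2 := mul_le_mul_of_nonneg_left hS1
          (by have := mul_nonneg hG1 hw.le; linarith : (0:ℝ) ≤ 2 * ((Bs' α - Bs' b) * (α - b)))
        have m3 := mul_le_mul_of_nonneg_left hS1 (mul_nonneg hRpos.le hw.le)
        have msq := sq_nonneg ((Bs' β - Bs' α) * (α - b) - (Bs' α - Bs' b) * (b - a))
        have hcontra : (0:ℝ) < 2 * (Bs' α - Bs' b) * (α - b)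
            * (((Bs' β - Bs' α) - (Bs' b - Bs' a)) * ((b - a) + (α - b))) := by
          apply mul_pos (mul_pos (by linarith only [hG1pos] : (0:ℝ) < 2 * (Bs' α - Bs' b)) hw)
          exact mul_pos (sub_pos.2 hR) (by linarith only [hlt, hw])
        linarith only [m1, m2, m3, msq, hcontra]
    -- Lemma 2 : (Bs' α - Bs' a) * (α - b) ≤ (Bs' β - Bs' b) * (β - b)
    have hL2 : (Bs' α - Bs' a) * (α - b) ≤ (Bs' β - Bs' b) * (β - b) := by
      rcases le_or_gt α b with hcase | hcase
      · have hlhs : (Bs' α - Bs' a) * (α - b) ≤ 0 :=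
          mul_nonpos_of_nonneg_of_nonpos (by linarith) (by linarith)
        have hrhs : (0:ℝ) ≤ (Bs' β - Bs' b) * (β - b) :=
          mul_nonneg (by linarith) (by linarith)
        linarith
      · have h1 : (0:ℝ) ≤ Bs b - Bs a - Bs' a * (b - a) := by
          linarith [hgrad haM hbM]
        have h2 : (0:ℝ) ≤ Bs α - Bs β - Bs' β * (α - β) := by
          linarith [hgrad hβM hαM]
        have h3 : (0:ℝ) ≤ (Bs' β - Bs' α) * (α - b) :=
          mul_nonneg (by linarith) (by linarith)
        linarith only [h1, h2, h3, hda, hdb]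
    -- conclude
    have hxb : b ≤ xbar := hbx
    have hprod := mul_le_mul_of_nonneg_right hPQ (by linarith : (0:ℝ) ≤ xbar - b)
    linarith only [hL2, hprod]
  -- wrap up with exp and n
  have hn0 : (0:ℝ) ≤ (n:ℝ) := Nat.cast_nonneg n
  exact Real.exp_le_exp.2 (mul_le_mul_of_nonneg_left (by linarith) hn0)

end
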